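/- Let X, Y be real normed spaces, A : X → Y continuous linear, C ⊆ X and D ⊆ Y nonempty closed convex sets, and K := Λ + epi σ_C with Λ := {(A*λ, σ_D(λ)) : λ ∈ Y*, σ_D(λ) < ∞}. Then C ∩ A⁻¹(D) ≠ ∅ if and only if (0, −1) ∉ w*-cl K (closure in X* × ℝ with the weak-* product topology). -/

import Mathlib

open Pointwise

/-- The strong dual element viewed in the weak-* dual. -/
def toWeakDual {X : Type*} [NormedAddCommGroup X] [NormedSpace ℝ X]
    (f : X →L[ℝ] ℝ) : WeakDual ℝ X := f

open Topology

section Aux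

variable {X : Type*} [NormedAddCommGroup X] [NormedSpace ℝ X]

lemma wd_add_apply (f g : WeakDual ℝ X) (x : X) : (f + g) x = f x + g x := rfl
lemma wd_smul_apply (c : ℝ) (f : WeakDual ℝ X) (x : X) : (c • f) x = c * f x := rfl
lemma wd_zero_apply (x : X) : (0 : WeakDual ℝ X) x = 0 := rfl
lemma toWeakDual_apply (f : X →L[ℝ] ℝ) (x : X) : toWeakDual f x = f x := rfl

/-- Every continuous linear functional on the weak-* dual is evaluation at a point. -/
lemma weakdual_dual_eval (ψ : WeakDual ℝ X →L[ℝ] ℝ) :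
    ∃ x : X, ∀ p : WeakDual ℝ X, ψ p = p x := by
  have hmem : ψ ⁻¹' Set.Ioo (-1 : ℝ) 1 ∈ 𝓝 (0 : WeakDual ℝ X) := by
    refine (isOpen_Ioo.preimage ψ.continuous).mem_nhds ?_
    simp [Set.mem_Ioo]
  obtain ⟨U, hU, hsub⟩ :=
    ((LinearMap.hasBasis_weakBilin (topDualPairing ℝ X)).mem_iff.mp hmem)
  obtain ⟨s, r, hr, rfl⟩ := (SeminormFamily.basisSets_iff _).mp hU
  have key : ∀ p : WeakDual ℝ X, (∀ x ∈ s, p x = 0) → ψ p = 0 := by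
    intro p hp
    by_contra hne
    have hball : ∀ c : ℝ,
        (c • p) ∈ Seminorm.ball (s.sup ((topDualPairing ℝ X).toSeminormFamily)) 0 r := by
      intro c
      apply (Seminorm.mem_ball_zero _).mpr
      rcases s.eq_empty_or_nonempty with h | h
      · simp [h]
        exact hr
      · apply Seminorm.finset_sup_apply_lt hr
        intro x hx
        show ‖c * p x‖ < r
        rw [hp x hx, mul_zero, norm_zero]
        exact hr
    have habs : ∀ c : ℝ, c * ψ p ∈ Set.Ioo (-1 : ℝ) 1 := by
      intro c
      have := hsub (hball c)
      have h' : ψ (c • p) ∈ Set.Ioo (-1 : ℝ) 1 := this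
      simpa [map_smul, smul_eq_mul] using h'
    have := (habs (2 / ψ p)).2
    rw [div_mul_cancel₀ _ hne] at this
    linarith
  let L : s → (WeakDual ℝ X →ₗ[ℝ] ℝ) := fun x => (topDualPairing ℝ X).flip x.1
  have hker : (⨅ i : s, LinearMap.ker (L i)) ≤ LinearMap.ker (ψ : WeakDual ℝ X →ₗ[ℝ] ℝ) := by
    intro p hp
    rw [Submodule.mem_iInf] at hp
    rw [LinearMap.mem_ker]
    exact key p (fun x hx => hp ⟨x, hx⟩)
  have hspan := mem_span_of_iInf_ker_le_ker (𝕜 := ℝ) hker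
  obtain ⟨c, hc⟩ := (Finsupp.mem_span_range_iff_exists_finsupp).mp hspan
  refine ⟨c.sum fun i a => a • (i : X), fun p => ?_⟩
  have h1 : ψ p = (c.sum fun i a => a • L i) p := by rw [hc]; rfl
  rw [h1, Finsupp.sum, Finsupp.sum, LinearMap.coe_sum, Finset.sum_apply, map_sum]
  refine Finset.sum_congr rfl fun i _ => ?_
  rw [LinearMap.smul_apply, map_smul]
  rfl

end Aux

set_option maxHeartbeats 1000000 in
/-- Proposition 1 (Existence theorem): for `C, D` nonempty closed convex sets,
`C ∩ A⁻¹(D) ≠ ∅` iff `(0, −1)` does not belong to the weak-* closure of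
`K := Λ + epi σ_C`. -/
theorem feasible_nonempty_iff_not_mem_wclosure_K {X Y : Type*}
    [NormedAddCommGroup X] [NormedSpace ℝ X] [NormedAddCommGroup Y] [NormedSpace ℝ Y]
    (A : X →L[ℝ] Y) (C : Set X) (D : Set Y)
    (hCne : C.Nonempty) (hCcl : IsClosed C) (hCconv : Convex ℝ C)
    (hDne : D.Nonempty) (hDcl : IsClosed D) (hDconv : Convex ℝ D) :
    (C ∩ A ⁻¹' D).Nonempty ↔
      ((0 : WeakDual ℝ X), (-1 : ℝ)) ∉
        closure
          ({p : WeakDual ℝ X × ℝ | ∃ l : Y →L[ℝ] ℝ, BddAbove ((fun y => l y) '' D) ∧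
              p = (toWeakDual (l.comp A), sSup ((fun y => l y) '' D))}
            + {p : WeakDual ℝ X × ℝ | ∀ x ∈ C, p.1 x ≤ p.2}) := by
  classical
  set Lam : Set (WeakDual ℝ X × ℝ) :=
    {p : WeakDual ℝ X × ℝ | ∃ l : Y →L[ℝ] ℝ, BddAbove ((fun y => l y) '' D) ∧
        p = (toWeakDual (l.comp A), sSup ((fun y => l y) '' D))} with hLamdef
  set Ep : Set (WeakDual ℝ X × ℝ) := {p : WeakDual ℝ X × ℝ | ∀ x ∈ C, p.1 x ≤ p.2} with hEpdef
  -- generic membership lemma for Λ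
  have hLamMem : ∀ (l : Y →L[ℝ] ℝ) (v : ℝ), (∀ y ∈ D, l y ≤ v) →
      ((toWeakDual (l.comp A), sSup ((fun y => l y) '' D)) ∈ Lam ∧
        sSup ((fun y => l y) '' D) ≤ v) := by
    intro l v hv
    have hbdd : BddAbove ((fun y => l y) '' D) := by
      refine ⟨v, ?_⟩
      rintro z ⟨y, hy, rfl⟩
      exact hv y hy
    refine ⟨⟨l, hbdd, rfl⟩, csSup_le (hDne.image _) ?_⟩
    rintro z ⟨y, hy, rfl⟩
    exact hv y hy
  have himg0 : (fun y => (0 : Y →L[ℝ] ℝ) y) '' D = {(0 : ℝ)} := by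
    rw [show (fun y => (0 : Y →L[ℝ] ℝ) y) = fun _ => (0 : ℝ) from funext fun y => rfl]
    exact hDne.image_const 0
  have hzeroLam : ((0 : WeakDual ℝ X), (0 : ℝ)) ∈ Lam := by
    refine ⟨0, ?_, ?_⟩
    · rw [himg0]; exact bddAbove_singleton
    · rw [himg0, csSup_singleton]
      refine Prod.ext ?_ rfl
      show (0 : WeakDual ℝ X) = toWeakDual ((0 : Y →L[ℝ] ℝ).comp A)
      rw [ContinuousLinearMap.zero_comp]
      rfl
  constructor
  · -- feasible ⟹ (0,-1) not in closure
    rintro ⟨x₀, hx₀C, hx₀D⟩ hmem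
    have hSclosed : IsClosed {q : WeakDual ℝ X × ℝ | q.1 x₀ ≤ q.2} :=
      isClosed_le ((WeakDual.eval_continuous x₀).comp continuous_fst) continuous_snd
    have hsub : Lam + Ep ⊆ {q : WeakDual ℝ X × ℝ | q.1 x₀ ≤ q.2} := by
      rintro q hq
      rw [Set.mem_add] at hq
      obtain ⟨a, ha, b, hb, rfl⟩ := hq
      obtain ⟨l, hbdd, rfl⟩ := ha
      have h1 : l (A x₀) ≤ sSup ((fun y => l y) '' D) := le_csSup hbdd ⟨A x₀, hx₀D, rfl⟩
      have h2 : b.1 x₀ ≤ b.2 := hb x₀ hx₀C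
      show ((toWeakDual (l.comp A), sSup ((fun y => l y) '' D)) + b).1 x₀ ≤
        ((toWeakDual (l.comp A), sSup ((fun y => l y) '' D)) + b).2
      simp only [Prod.fst_add, Prod.snd_add, wd_add_apply]
      rw [show toWeakDual (l.comp A) x₀ = l (A x₀) from rfl]
      exact add_le_add h1 h2
    have hin := closure_minimal hsub hSclosed hmem
    rw [Set.mem_setOf_eq] at hin
    rw [show (0 : WeakDual ℝ X) x₀ = 0 from rfl] at hin
    norm_num at hin
  · -- (0,-1) not in closure ⟹ feasible
    intro hK
    haveI : LocallyConvexSpace ℝ (WeakDual ℝ X) := WeakBilin.locallyConvexSpace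
    -- convexity of K
    have hKconv : Convex ℝ (Lam + Ep) := by
      intro q1 hq1 q2 hq2 s t hs ht hst
      rw [Set.mem_add] at hq1 hq2 ⊢
      obtain ⟨a1, ⟨l1, hb1, rfl⟩, b1, hb1E, rfl⟩ := hq1
      obtain ⟨a2, ⟨l2, hb2, rfl⟩, b2, hb2E, rfl⟩ := hq2
      set M1 := sSup ((fun y => l1 y) '' D) with hM1
      set M2 := sSup ((fun y => l2 y) '' D) with hM2
      have hbound : ∀ y ∈ D, (s • l1 + t • l2) y ≤ s * M1 + t * M2 := by
        intro y hy
        have h1 : l1 y ≤ M1 := le_csSup hb1 ⟨y, hy, rfl⟩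
        have h2 : l2 y ≤ M2 := le_csSup hb2 ⟨y, hy, rfl⟩
        rw [show (s • l1 + t • l2) y = s * l1 y + t * l2 y from rfl]
        exact add_le_add (mul_le_mul_of_nonneg_left h1 hs) (mul_le_mul_of_nonneg_left h2 ht)
      obtain ⟨hmemLam, hsup⟩ := hLamMem (s • l1 + t • l2) _ hbound
      set M := sSup ((fun y => (s • l1 + t • l2) y) '' D) with hM
      set δ : ℝ := s * M1 + t * M2 - M with hδ
      have hδ0 : 0 ≤ δ := by rw [hδ]; linarith
      refine ⟨_, hmemLam, s • b1 + t • b2 + ((0 : WeakDual ℝ X), δ), ?_, ?_⟩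
      · intro x hx
        have e1 : (s • b1 + t • b2 + ((0 : WeakDual ℝ X), δ)).1 x
            = s * b1.1 x + t * b2.1 x := by
          simp only [Prod.fst_add, Prod.smul_fst, wd_add_apply, wd_smul_apply, wd_zero_apply]
          ring
        have e2 : (s • b1 + t • b2 + ((0 : WeakDual ℝ X), δ)).2
            = s * b1.2 + t * b2.2 + δ := by
          simp only [Prod.snd_add, Prod.smul_snd, smul_eq_mul]
        rw [e1, e2]
        have h1 := mul_le_mul_of_nonneg_left (hb1E x hx) hs
        have h2 := mul_le_mul_of_nonneg_left (hb2E x hx) ht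
        linarith
      · -- the sum identity
        apply Prod.ext
        · apply DFunLike.ext
          intro x
          simp only [Prod.fst_add, Prod.smul_fst, wd_add_apply, wd_smul_apply, wd_zero_apply,
            toWeakDual_apply]
          rw [show ((s • l1 + t • l2).comp A) x = s * l1 (A x) + t * l2 (A x) from rfl]
          rw [show (l1.comp A) x = l1 (A x) from rfl, show (l2.comp A) x = l2 (A x) from rfl]
          ring
        · simp only [Prod.snd_add, Prod.smul_snd, smul_eq_mul]
          rw [hδ]
          ring
    have hclconv : Convex ℝ (closure (Lam + Ep)) := hKconv.closure
    obtain ⟨φ, u, hlt, hu⟩ := geometric_hahn_banach_closed_point hclconv isClosed_closure hK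
    set ψ : WeakDual ℝ X →L[ℝ] ℝ := φ.comp (ContinuousLinearMap.inl ℝ (WeakDual ℝ X) ℝ) with hψ
    set β : ℝ := φ ((0 : WeakDual ℝ X), (1 : ℝ)) with hβdef
    have hφ : ∀ (p : WeakDual ℝ X) (t : ℝ), φ (p, t) = ψ p + t * β := by
      intro p t
      have h1 : (p, t) = ((p, (0 : ℝ)) : WeakDual ℝ X × ℝ)
          + t • (((0 : WeakDual ℝ X), (1 : ℝ)) : WeakDual ℝ X × ℝ) := by
        simp [Prod.ext_iff]
      rw [h1, map_add, map_smul, smul_eq_mul]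
      rfl
    have hzeroK : ∀ r : ℝ, 0 ≤ r → (((0 : WeakDual ℝ X), r) : WeakDual ℝ X × ℝ) ∈ Lam + Ep := by
      intro r hr
      rw [Set.mem_add]
      refine ⟨_, hzeroLam, ((0 : WeakDual ℝ X), r), ?_, by simp⟩
      intro x _
      rw [show (((0 : WeakDual ℝ X), r) : WeakDual ℝ X × ℝ).1 x = 0 from rfl]
      exact hr
    have hu0 : 0 < u := by
      have h := hlt _ (subset_closure (hzeroK 0 le_rfl))
      have h0 : φ (((0 : WeakDual ℝ X), (0 : ℝ)) : WeakDual ℝ X × ℝ) = 0 := by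
        rw [show (((0 : WeakDual ℝ X), (0 : ℝ)) : WeakDual ℝ X × ℝ) = 0 from rfl, map_zero]
      linarith
    have hβu : u < -β := by
      have h1 : φ (((0 : WeakDual ℝ X), (-1 : ℝ)) : WeakDual ℝ X × ℝ) = -β := by
        rw [hφ, map_zero]
        ring
      linarith [hu, h1]
    have hβ0 : β < 0 := by linarith
    have hβpos : (0 : ℝ) < -β := by linarith
    obtain ⟨x₁, hx₁⟩ := weakdual_dual_eval ψ
    set x₀ : X := (-β)⁻¹ • x₁ with hx₀def
    have hx₁eq : x₁ = (-β) • x₀ := by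
      rw [hx₀def, smul_smul, mul_inv_cancel₀ (ne_of_gt hβpos), one_smul]
    have hAx₀D : A x₀ ∈ D := by
      by_contra hnot
      obtain ⟨l, v, hlD, hlv⟩ := geometric_hahn_banach_closed_point hDconv hDcl hnot
      have hw : (0 : ℝ) < (-β) * (l (A x₀) - v) := mul_pos hβpos (by linarith)
      set w : ℝ := (-β) * (l (A x₀) - v) with hwdef
      set lam : ℝ := 2 * u / w with hlamdef
      have hlam0 : 0 < lam := by positivity
      have hbound : ∀ y ∈ D, (lam • l) y ≤ lam * v := by
        intro y hy
        rw [show (lam • l) y = lam * l y from rfl]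
        exact mul_le_mul_of_nonneg_left (hlD y hy).le hlam0.le
      obtain ⟨hmemLam, hsup⟩ := hLamMem (lam • l) (lam * v) hbound
      have hKmem : (toWeakDual ((lam • l).comp A), sSup ((fun y => (lam • l) y) '' D))
          ∈ Lam + Ep := by
        rw [Set.mem_add]
        refine ⟨_, hmemLam, (((0 : WeakDual ℝ X), (0 : ℝ)) : WeakDual ℝ X × ℝ), ?_, by simp⟩
        intro x _
        rw [show (((0 : WeakDual ℝ X), (0 : ℝ)) : WeakDual ℝ X × ℝ).1 x = 0 from rfl]
      have hval := hlt _ (subset_closure hKmem)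
      rw [hφ] at hval
      have he1 : ψ (toWeakDual ((lam • l).comp A)) = lam * ((-β) * l (A x₀)) := by
        rw [hx₁ _]
        rw [show toWeakDual ((lam • l).comp A) x₁ = lam * l (A x₁) from rfl]
        rw [hx₁eq, map_smul, map_smul, smul_eq_mul]
      rw [he1] at hval
      have h2 : (lam * v) * β ≤ sSup ((fun y => (lam • l) y) '' D) * β :=
        mul_le_mul_of_nonpos_right hsup (le_of_lt hβ0)
      have hsum : lam * ((-β) * l (A x₀)) + (lam * v) * β = lam * w := by
        rw [hwdef]; ring
      have hlw : lam * w = 2 * u := by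
        rw [hlamdef, div_mul_cancel₀ _ (ne_of_gt hw)]
      linarith
    have hx₀C : x₀ ∈ C := by
      by_contra hnot
      obtain ⟨c, v, hcC, hcv⟩ := geometric_hahn_banach_closed_point hCconv hCcl hnot
      have hw : (0 : ℝ) < (-β) * (c x₀ - v) := mul_pos hβpos (by linarith)
      set w : ℝ := (-β) * (c x₀ - v) with hwdef
      set lam : ℝ := 2 * u / w with hlamdef
      have hlam0 : 0 < lam := by positivity
      have hKmem : ((toWeakDual (lam • c), lam * v) : WeakDual ℝ X × ℝ) ∈ Lam + Ep := by
        rw [Set.mem_add]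
        refine ⟨_, hzeroLam, ((toWeakDual (lam • c), lam * v) : WeakDual ℝ X × ℝ), ?_, by simp⟩
        intro x hx
        rw [show ((toWeakDual (lam • c), lam * v) : WeakDual ℝ X × ℝ).1 x = lam * c x from rfl]
        exact mul_le_mul_of_nonneg_left (hcC x hx).le hlam0.le
      have hval := hlt _ (subset_closure hKmem)
      rw [hφ] at hval
      have he1 : ψ (toWeakDual (lam • c)) = lam * ((-β) * c x₀) := by
        rw [hx₁ _]
        rw [show toWeakDual (lam • c) x₁ = lam * c x₁ from rfl]
        rw [hx₁eq, map_smul, smul_eq_mul]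
      rw [he1] at hval
      have hsum : lam * ((-β) * c x₀) + (lam * v) * β = lam * w := by
        rw [hwdef]; ring
      have hlw : lam * w = 2 * u := by
        rw [hlamdef, div_mul_cancel₀ _ (ne_of_gt hw)]
      linarith
    exact ⟨x₀, hx₀C, hAx₀D⟩
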